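/- Let μ*, Σ* solve the maximization of the Gaussian density f(x | μ, Σ) over μ ∈ ℝ^p and Σ ⪰ σ²I subject to ‖μ - x̂‖₂² + Tr(Σ + σ²I - 2(σ² Σ)^{1/2}) ≤ ε₀², where x ≠ x̂ and 0 < ε₀ < ‖x - x̂‖₂. Then the constraint is active at the optimum: ‖μ* - x̂‖₂² + Tr(Σ* + σ²I - 2(σ²Σ*)^{1/2}) = ε₀². -/

import Mathlib

open Matrix Real

open Classical in
/-- Positive-semidefinite square root of a matrix, extended by `0` on
non-PSD matrices. -/
noncomputable def msqrt {p : ℕ} (M : Matrix (Fin p) (Fin p) ℝ) :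
    Matrix (Fin p) (Fin p) ℝ :=
  if h : M.PosSemidef then
    (h.1.eigenvectorUnitary : Matrix (Fin p) (Fin p) ℝ) *
      diagonal ((↑) ∘ (√·) ∘ h.1.eigenvalues) *
      (star h.1.eigenvectorUnitary : Matrix (Fin p) (Fin p) ℝ)
  else 0

/-- The Gaussian density `f(x | μ, Σ)`. -/
noncomputable def gaussDensity {p : ℕ} (x μ : Fin p → ℝ)
    (S : Matrix (Fin p) (Fin p) ℝ) : ℝ :=
  Real.exp (-(1 / 2) * ((x - μ) ⬝ᵥ S⁻¹.mulVec (x - μ))) /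
    ((2 * π) ^ ((p : ℝ) / 2) * Real.sqrt S.det)

/-- The squared Gaussian-Wasserstein transport cost from `N(μ, S)` to
`N(x̂, σ²I)`. -/
noncomputable def wcost {p : ℕ} (σ : ℝ) (xhat μ : Fin p → ℝ)
    (S : Matrix (Fin p) (Fin p) ℝ) : ℝ :=
  (μ - xhat) ⬝ᵥ (μ - xhat) +
    (S + σ ^ 2 • (1 : Matrix (Fin p) (Fin p) ℝ) -
      2 • msqrt (σ ^ 2 • S)).trace

-- auxiliary lemmas
lemma msqrt_isHermitian {p : ℕ} {M : Matrix (Fin p) (Fin p) ℝ} (h : M.PosSemidef) :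
    (msqrt M)ᴴ = msqrt M := by
  rw [msqrt, dif_pos h]
  rw [conjTranspose_mul, conjTranspose_mul, diagonal_conjTranspose]
  simp [Matrix.star_eq_conjTranspose, mul_assoc]

lemma msqrt_mul_self {p : ℕ} {M : Matrix (Fin p) (Fin p) ℝ} (h : M.PosSemidef) :
    msqrt M * msqrt M = M := by
  rw [msqrt, dif_pos h]
  have hU : (star h.1.eigenvectorUnitary : Matrix (Fin p) (Fin p) ℝ) *
      (h.1.eigenvectorUnitary : Matrix (Fin p) (Fin p) ℝ) = 1 :=
    Unitary.coe_star_mul_self _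
  have hD : diagonal (((↑) ∘ (√·) ∘ h.1.eigenvalues : Fin p → ℝ)) *
      diagonal ((↑) ∘ (√·) ∘ h.1.eigenvalues) = diagonal ((↑) ∘ h.1.eigenvalues) := by
    rw [diagonal_mul_diagonal]
    congr 1
    funext i
    simp [Real.mul_self_sqrt (h.eigenvalues_nonneg i)]
  calc _ = (h.1.eigenvectorUnitary : Matrix (Fin p) (Fin p) ℝ) *
        (diagonal ((↑) ∘ (√·) ∘ h.1.eigenvalues) *
        ((star h.1.eigenvectorUnitary : Matrix (Fin p) (Fin p) ℝ) *
        (h.1.eigenvectorUnitary : Matrix (Fin p) (Fin p) ℝ)) *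
        diagonal ((↑) ∘ (√·) ∘ h.1.eigenvalues)) *
        (star h.1.eigenvectorUnitary : Matrix (Fin p) (Fin p) ℝ) := by
          simp only [mul_assoc]
    _ = M := by
          rw [hU, mul_one, hD]
          conv_rhs => rw [h.1.spectral_theorem]
          simp
          rfl

lemma psd_smul {p : ℕ} {M : Matrix (Fin p) (Fin p) ℝ} (hM : M.PosSemidef)
    {c : ℝ} (hc : 0 ≤ c) : (c • M).PosSemidef := by
  refine ⟨?_, fun v => ?_⟩
  · unfold Matrix.IsHermitian
    rw [conjTranspose_smul, hM.1]
    simp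
  · exact (hM.smul hc).2 v

lemma psd_trace_nonneg {p : ℕ} {M : Matrix (Fin p) (Fin p) ℝ}
    (hM : M.PosSemidef) : 0 ≤ M.trace := by
  rw [Matrix.trace]
  refine Finset.sum_nonneg fun i _ => ?_
  exact hM.diag_nonneg

theorem constraint_active_at_optimum (p : ℕ) (σ ε₀ : ℝ) (hσ : 0 < σ)
    (hε : 0 < ε₀) (x xhat : Fin p → ℝ) (hxx : x ≠ xhat)
    (hfar : ε₀ ^ 2 < (x - xhat) ⬝ᵥ (x - xhat))
    (μstar : Fin p → ℝ) (Sstar : Matrix (Fin p) (Fin p) ℝ)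
    (hpsd : (Sstar - σ ^ 2 • (1 : Matrix (Fin p) (Fin p) ℝ)).PosSemidef)
    (hfeas : wcost σ xhat μstar Sstar ≤ ε₀ ^ 2)
    (hopt : ∀ (μ : Fin p → ℝ) (S : Matrix (Fin p) (Fin p) ℝ),
      (S - σ ^ 2 • (1 : Matrix (Fin p) (Fin p) ℝ)).PosSemidef →
      wcost σ xhat μ S ≤ ε₀ ^ 2 →
      gaussDensity x μ S ≤ gaussDensity x μstar Sstar) :
    wcost σ xhat μstar Sstar = ε₀ ^ 2 := by
  by_contra hne
  have hlt : wcost σ xhat μstar Sstar < ε₀ ^ 2 := lt_of_le_of_ne hfeas hne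
  have hσ2 : (0:ℝ) < σ ^ 2 := by positivity
  have hSone : (σ ^ 2 • (1 : Matrix (Fin p) (Fin p) ℝ)).PosDef := by
    rw [smul_one_eq_diagonal]
    exact Matrix.PosDef.diagonal fun _ => hσ2
  have hS : Sstar.PosDef := by
    have h := Matrix.PosDef.posSemidef_add hpsd hSone
    simpa using h
  -- trace term nonneg
  set T : ℝ := (Sstar + σ ^ 2 • (1 : Matrix (Fin p) (Fin p) ℝ) -
      2 • msqrt (σ ^ 2 • Sstar)).trace with hT
  have hTnn : 0 ≤ T := by
    have hSpsd : Sstar.PosSemidef := hS.posSemidef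
    set R := σ⁻¹ • msqrt (σ ^ 2 • Sstar) with hR
    have hps2 : (σ ^ 2 • Sstar).PosSemidef := psd_smul hSpsd hσ2.le
    have hsq : msqrt (σ ^ 2 • Sstar) = σ • R := by
      rw [hR, smul_smul, mul_inv_cancel₀ hσ.ne', one_smul]
    have key : Sstar + σ ^ 2 • (1 : Matrix (Fin p) (Fin p) ℝ) -
        2 • msqrt (σ ^ 2 • Sstar) = (R - σ • 1)ᴴ * (R - σ • 1) := by
      have hRh : Rᴴ = R := by
        rw [hR, conjTranspose_smul, msqrt_isHermitian hps2]
        simp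
      have : (R - σ • 1)ᴴ = R - σ • 1 := by
        rw [conjTranspose_sub, hRh, conjTranspose_smul]
        simp
      have hRR : R * R = Sstar := by
        rw [hR, smul_mul_smul_comm, msqrt_mul_self hps2, smul_smul]
        field_simp
        simp
      clear_value R
      rw [this, hsq, sub_mul, mul_sub, mul_sub, hRR, smul_mul_assoc, one_mul,
        mul_smul_comm, mul_one, smul_one_mul, smul_smul, ← pow_two, two_smul]
      abel
    rw [hT, key]
    exact psd_trace_nonneg (posSemidef_conjTranspose_mul_self _)
  -- rewrite wcost
  have hwc : ∀ μ : Fin p → ℝ, wcost σ xhat μ Sstar = (μ - xhat) ⬝ᵥ (μ - xhat) + T := by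
    intro μ; rfl
  set v : Fin p → ℝ := x - μstar with hv
  by_cases hv0 : v = 0
  · -- μstar = x, contradiction with hfar
    have hμx : μstar = x := by
      have := sub_eq_zero.mp hv0
      exact this.symm
    rw [hwc, hμx] at hlt
    linarith
  · -- perturb μ toward x
    have hQ : 0 < v ⬝ᵥ Sstar⁻¹ *ᵥ v := by
      simpa using hS.inv.dotProduct_mulVec_pos hv0
    -- continuity to find small t
    set g : ℝ → ℝ := fun t => wcost σ xhat (μstar + t • v) Sstar with hg
    have hgc : Continuous g := by
      have hge : g = fun t => (∑ i, (μstar i + t * v i - xhat i) *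
          (μstar i + t * v i - xhat i)) + T := by
        funext t
        show wcost σ xhat (μstar + t • v) Sstar = _
        rw [hwc]
        rfl
      rw [hge]
      refine Continuous.add ?_ continuous_const
      exact continuous_finset_sum _ fun i _ => by fun_prop
    have h0 : g 0 < ε₀ ^ 2 := by
      simp only [hg, zero_smul, add_zero]
      exact hlt
    have hopen : IsOpen (g ⁻¹' Set.Iio (ε₀ ^ 2)) := hgc.isOpen_preimage _ isOpen_Iio
    obtain ⟨δ, hδ, hball⟩ := Metric.isOpen_iff.mp hopen 0 h0
    set t : ℝ := min (δ / 2) (1 / 2) with ht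
    have ht0 : 0 < t := lt_min (by linarith) (by norm_num)
    have ht1 : t < 1 := lt_of_le_of_lt (min_le_right _ _) (by norm_num)
    have htδ : t < δ := lt_of_le_of_lt (min_le_left _ _) (by linarith)
    have htfeas : wcost σ xhat (μstar + t • v) Sstar < ε₀ ^ 2 := by
      have : t ∈ Metric.ball (0 : ℝ) δ := by
        rw [Metric.mem_ball, Real.dist_eq, sub_zero, abs_of_pos ht0]
        exact htδ
      exact hball this
    have hle := hopt (μstar + t • v) Sstar hpsd htfeas.le
    -- but density strictly increases: contradiction
    have hxμt : x - (μstar + t • v) = (1 - t) • v := by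
      funext i
      simp [hv, Pi.sub_apply, Pi.add_apply, Pi.smul_apply, sub_smul]
      ring
    have hquad : (x - (μstar + t • v)) ⬝ᵥ Sstar⁻¹ *ᵥ (x - (μstar + t • v)) =
        (1 - t) ^ 2 * (v ⬝ᵥ Sstar⁻¹ *ᵥ v) := by
      rw [hxμt, Matrix.mulVec_smul, smul_dotProduct, dotProduct_smul, smul_eq_mul,
        smul_eq_mul, ← mul_assoc, ← pow_two]
    have hDpos : 0 < (2 * π) ^ ((p : ℝ) / 2) * Real.sqrt Sstar.det := by
      have h2π : (0:ℝ) < 2 * π := by positivity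
      exact mul_pos (Real.rpow_pos_of_pos h2π _) (Real.sqrt_pos.mpr hS.det_pos)
    have hlt2 : gaussDensity x μstar Sstar < gaussDensity x (μstar + t • v) Sstar := by
      unfold gaussDensity
      rw [div_lt_div_iff_of_pos_right hDpos]
      apply Real.exp_lt_exp.mpr
      rw [hquad]
      have h1t : (1 - t) ^ 2 < 1 := by nlinarith
      have hvq : (x - μstar) ⬝ᵥ Sstar⁻¹ *ᵥ (x - μstar) = v ⬝ᵥ Sstar⁻¹ *ᵥ v := by rw [hv]
      rw [hvq]
      nlinarith
    exact absurd hle (not_le.mpr hlt2)
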